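/- For every c ∈ ℂ, the assignment [z₁:z₂] ↦ [z₁² + 2c·z₁z₂ : 2c̄·z₁z₂ − z₂²] defines a map p'_c : ℙ¹(ℂ) → ℙ¹(ℂ) (i.e., the two coordinate quadratics never vanish simultaneously at any (z₁, z₂) ≠ (0,0)); every fiber of p'_c has cardinality 1 or 2; exactly two points of ℙ¹(ℂ) have a singleton fiber; consequently, for every subset P ⊆ ℙ¹(ℂ) with #P ≥ 3, the preimage (p'_c)⁻¹(P) has at least 4 elements. -/
import Mathlib


noncomputable section

/-- The pair of coordinate quadratics `(z₁² + 2c·z₁z₂, 2c̄·z₁z₂ − z₂²)` defining the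
map `p'_c` on homogeneous coordinates. -/
def Fc (c : ℂ) (v : Fin 2 → ℂ) : Fin 2 → ℂ :=
  ![v 0 ^ 2 + 2 * c * (v 0 * v 1), 2 * (starRingEnd ℂ) c * (v 0 * v 1) - v 1 ^ 2]

open Projectivization

abbrev P1 := Projectivization ℂ (Fin 2 → ℂ)

lemma vec_ne_zero {v : Fin 2 → ℂ} (h : v ≠ 0) : v 0 ≠ 0 ∨ v 1 ≠ 0 := by
  by_contra hc
  push_neg at hc
  exact h (funext fun i => by fin_cases i <;> simp [hc.1, hc.2])

lemma cross_mk_eq_mk {v w : Fin 2 → ℂ} (hv : v ≠ 0) (hw : w ≠ 0) :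
    Projectivization.mk ℂ v hv = Projectivization.mk ℂ w hw ↔ v 0 * w 1 = v 1 * w 0 := by
  rw [mk_eq_mk_iff]
  constructor
  · rintro ⟨a, ha⟩
    have h0 : v 0 = (a : ℂ) * w 0 := by rw [← ha]; simp [Units.smul_def]
    have h1 : v 1 = (a : ℂ) * w 1 := by rw [← ha]; simp [Units.smul_def]
    rw [h0, h1]; ring
  · intro h
    rcases em (w 0 = 0) with hw0 | hw0
    · have hw1 : w 1 ≠ 0 := by rcases vec_ne_zero hw with h' | h'; exact absurd hw0 h'; exact h'
      have hv0 : v 0 = 0 := by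
        have := h
        rw [hw0, mul_zero] at this
        exact (mul_eq_zero.mp this).resolve_right hw1
      have hv1 : v 1 ≠ 0 := by rcases vec_ne_zero hv with h' | h'; exact absurd hv0 h'; exact h'
      refine ⟨Units.mk0 (v 1 / w 1) (div_ne_zero hv1 hw1), funext fun i => ?_⟩
      fin_cases i <;> simp [hw0, hv0] <;> field_simp
    · have hv0 : v 0 ≠ 0 := by
        intro hv0
        rw [hv0, zero_mul] at h
        rcases mul_eq_zero.mp h.symm with h' | h'
        · exact hv (funext fun i => by fin_cases i <;> simp [hv0, h'])
        · exact hw0 h'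
      refine ⟨Units.mk0 (v 0 / w 0) (div_ne_zero hv0 hw0), funext fun i => ?_⟩
      fin_cases i
      · show v 0 / w 0 * w 0 = v 0
        field_simp
      · show v 0 / w 0 * w 1 = v 1
        field_simp
        linear_combination h

/-- The zero set in ℙ¹ of the quadratic form `A z² + B zw + C w²`, expressed via `rep`. -/
def Qset (A B C : ℂ) : Set P1 :=
  {x | A * (x.rep 0) ^ 2 + B * (x.rep 0 * x.rep 1) + C * (x.rep 1) ^ 2 = 0}

lemma mk_mem_Qset (A B C : ℂ) (v : Fin 2 → ℂ) (hv : v ≠ 0) :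
    Projectivization.mk ℂ v hv ∈ Qset A B C ↔
      A * (v 0) ^ 2 + B * (v 0 * v 1) + C * (v 1) ^ 2 = 0 := by
  set x := Projectivization.mk ℂ v hv with hx
  obtain ⟨a, ha⟩ := (mk_eq_mk_iff ℂ x.rep v x.rep_nonzero hv).mp (mk_rep x)
  have h0 : x.rep 0 = (a : ℂ) * v 0 := by rw [← ha]; simp [Units.smul_def]
  have h1 : x.rep 1 = (a : ℂ) * v 1 := by rw [← ha]; simp [Units.smul_def]
  have key : A * (x.rep 0) ^ 2 + B * (x.rep 0 * x.rep 1) + C * (x.rep 1) ^ 2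
      = (a : ℂ) ^ 2 * (A * (v 0) ^ 2 + B * (v 0 * v 1) + C * (v 1) ^ 2) := by
    rw [h0, h1]; ring
  have ha2 : (a : ℂ) ^ 2 ≠ 0 := pow_ne_zero _ a.ne_zero
  constructor
  · intro h
    have h' : A * (x.rep 0) ^ 2 + B * (x.rep 0 * x.rep 1) + C * (x.rep 1) ^ 2 = 0 := h
    rw [key] at h'
    exact (mul_eq_zero.mp h').resolve_left ha2
  · intro h
    show A * (x.rep 0) ^ 2 + B * (x.rep 0 * x.rep 1) + C * (x.rep 1) ^ 2 = 0
    rw [key, h, mul_zero]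

lemma pt_nz (z : ℂ) : ![z, (1:ℂ)] ≠ 0 := by
  intro h; have := congrFun h 1; simp at this

lemma inf_nz : ![(1:ℂ), 0] ≠ 0 := by
  intro h; have := congrFun h 0; simp at this

def pt (z : ℂ) : P1 := Projectivization.mk ℂ ![z, 1] (pt_nz z)

def inf : P1 := Projectivization.mk ℂ ![1, 0] inf_nz

lemma pt_inj {z w : ℂ} : pt z = pt w ↔ z = w := by
  unfold pt; rw [cross_mk_eq_mk]; simp

lemma pt_ne_inf (z : ℂ) : pt z ≠ inf := by
  intro h; unfold pt inf at h; rw [cross_mk_eq_mk] at h; simp at h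

lemma P1_cases (x : P1) : (∃ z, x = pt z) ∨ x = inf := by
  rcases em (x.rep 1 = 0) with h1 | h1
  · right
    unfold inf; rw [← mk_rep x, cross_mk_eq_mk, h1]; simp
  · left
    refine ⟨x.rep 0 / x.rep 1, ?_⟩
    unfold pt; rw [← mk_rep x, cross_mk_eq_mk]
    simp; field_simp

lemma pt_mem_Qset (A B C z : ℂ) :
    pt z ∈ Qset A B C ↔ A * z ^ 2 + B * z + C = 0 := by
  unfold pt
  rw [mk_mem_Qset]
  simp

lemma inf_mem_Qset (A B C : ℂ) : inf ∈ Qset A B C ↔ A = 0 := by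
  unfold inf
  rw [mk_mem_Qset]
  simp

lemma quad_master (A B C : ℂ) (h : ¬(A = 0 ∧ B = 0 ∧ C = 0)) :
    ((Qset A B C).ncard = 1 ∨ (Qset A B C).ncard = 2) ∧
      ((Qset A B C).ncard = 1 ↔ B ^ 2 = 4 * A * C) := by
  rcases em (A = 0) with hA | hA
  · rcases em (B = 0) with hB | hB
    · -- A = 0, B = 0, C ≠ 0 : Qset = {inf}
      have hC : C ≠ 0 := fun hC => h ⟨hA, hB, hC⟩
      have hQ : Qset A B C = {inf} := by
        ext x
        rcases P1_cases x with ⟨z, rfl⟩ | rfl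
        · rw [pt_mem_Qset]
          simp [hA, hB, hC, pt_ne_inf z]
        · simp [inf_mem_Qset, hA]
      rw [hQ, Set.ncard_singleton]
      simp [hA, hB]
    · -- A = 0, B ≠ 0 : Qset = {inf, pt (-C/B)}
      have hQ : Qset A B C = {inf, pt (-C / B)} := by
        ext x
        rcases P1_cases x with ⟨z, rfl⟩ | rfl
        · rw [pt_mem_Qset]
          simp only [Set.mem_insert_iff, Set.mem_singleton_iff, pt_ne_inf z, false_or, pt_inj,
            hA]
          rw [eq_div_iff hB]
          constructor
          · intro h'; linear_combination h'
          · intro h'; linear_combination h'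
        · simp [inf_mem_Qset, hA]
      rw [hQ, Set.ncard_pair (Ne.symm (pt_ne_inf _))]
      constructor
      · right; rfl
      · constructor
        · intro h'; omega
        · intro h'
          rw [hA] at h'
          simp at h'
          exact absurd h' hB
  · -- A ≠ 0
    obtain ⟨s, hs⟩ := IsAlgClosed.exists_pow_nat_eq (k := ℂ) (B ^ 2 - 4 * A * C) (n := 2)
      (by norm_num)
    have hdis : discrim A B C = s * s := by rw [discrim, ← sq]; linear_combination -hs
    have hQ : Qset A B C = {pt ((-B + s) / (2 * A)), pt ((-B - s) / (2 * A))} := by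
      ext x
      rcases P1_cases x with ⟨z, rfl⟩ | rfl
      · rw [pt_mem_Qset]
        have := quadratic_eq_zero_iff hA hdis z
        rw [show A * z ^ 2 + B * z + C = A * (z * z) + B * z + C by ring, this]
        simp [pt_inj]
      · simp [inf_mem_Qset, hA, Ne.symm (pt_ne_inf _)]
    rw [hQ]
    have h2A : (2 : ℂ) * A ≠ 0 := by
      simp [hA]
    rcases em (s = 0) with hs0 | hs0
    · have : pt ((-B + s) / (2 * A)) = pt ((-B - s) / (2 * A)) := by rw [hs0]; ring_nf
      rw [this, Set.pair_eq_singleton, Set.ncard_singleton]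
      subst hs0
      simp only [true_or, true_and, true_iff]
      linear_combination -hs
    · have hne : pt ((-B + s) / (2 * A)) ≠ pt ((-B - s) / (2 * A)) := by
        rw [Ne, pt_inj, div_eq_div_iff h2A h2A]
        intro h'
        apply hs0
        have : s * (2 * (2 * A)) = 0 := by linear_combination h'
        simpa [hA] using this
      rw [Set.ncard_pair hne]
      refine ⟨Or.inr rfl, ⟨fun h' => by omega, fun h' => ?_⟩⟩
      exfalso
      apply hs0
      have : s ^ 2 = 0 := by rw [hs]; linear_combination h'
      exact pow_eq_zero_iff (n := 2) (by norm_num) |>.mp this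

lemma pos_aux (c : ℂ) (k m : ℝ) (hk : 0 ≤ k) (hm : 0 < m) :
    (k : ℂ) * ((starRingEnd ℂ) c * c) + m ≠ 0 := by
  have h1 : (starRingEnd ℂ) c * c = (Complex.normSq c : ℂ) := by
    rw [mul_comm, Complex.mul_conj]
  rw [h1]
  have : (k : ℂ) * (Complex.normSq c : ℂ) + (m : ℂ) = ((k * Complex.normSq c + m : ℝ) : ℂ) := by
    push_cast; ring
  rw [this, Complex.ofReal_ne_zero]
  have := Complex.normSq_nonneg c
  positivity

lemma Fc_ne_zero (c : ℂ) (v : Fin 2 → ℂ) (hv : v ≠ 0) : Fc c v ≠ 0 := by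
  intro hF
  have e0 : v 0 ^ 2 + 2 * c * (v 0 * v 1) = 0 := by
    have := congrFun hF 0; simpa [Fc] using this
  have e1 : 2 * (starRingEnd ℂ) c * (v 0 * v 1) - v 1 ^ 2 = 0 := by
    have := congrFun hF 1; simpa [Fc] using this
  have hfac : v 0 * (v 0 + 2 * c * v 1) = 0 := by linear_combination e0
  have hv1 : v 1 = 0 := by
    rcases mul_eq_zero.mp hfac with h0 | h0
    · have : v 1 ^ 2 = 0 := by rw [h0] at e1; linear_combination -e1
      exact pow_eq_zero_iff (n := 2) (by norm_num) |>.mp this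
    · have hv0 : v 0 = -(2 * c * v 1) := by linear_combination h0
      have key : ((4 : ℂ) * ((starRingEnd ℂ) c * c) + 1) * v 1 ^ 2 = 0 := by
        rw [hv0] at e1; linear_combination -e1
      have hnz : ((4 : ℝ) : ℂ) * ((starRingEnd ℂ) c * c) + ((1 : ℝ) : ℂ) ≠ 0 :=
        pos_aux c 4 1 (by norm_num) (by norm_num)
      have hnz' : (4 : ℂ) * ((starRingEnd ℂ) c * c) + 1 ≠ 0 := by
        simpa using hnz
      have : v 1 ^ 2 = 0 := (mul_eq_zero.mp key).resolve_left hnz'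
      exact pow_eq_zero_iff (n := 2) (by norm_num) |>.mp this
  have hv0 : v 0 = 0 := by
    have : v 0 ^ 2 = 0 := by rw [hv1] at e0; linear_combination e0
    exact pow_eq_zero_iff (n := 2) (by norm_num) |>.mp this
  exact hv (funext fun i => by fin_cases i <;> simp [hv0, hv1])

/-- For every `c ∈ ℂ`: the two coordinate quadratics of `p'_c` never vanish
simultaneously on `(z₁, z₂) ≠ 0`, so `[z₁:z₂] ↦ [z₁² + 2c·z₁z₂ : 2c̄·z₁z₂ − z₂²]` defines a
map `p'_c : ℙ¹(ℂ) → ℙ¹(ℂ)`; every fiber of `p'_c` has cardinality 1 or 2; exactly two points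
of `ℙ¹(ℂ)` have a singleton fiber; and consequently every subset `P ⊆ ℙ¹(ℂ)` with `#P ≥ 3`
has `#(p'_c)⁻¹(P) ≥ 4`. -/
theorem stmt13 (c : ℂ) :
    (∀ v : Fin 2 → ℂ, v ≠ 0 → Fc c v ≠ 0) ∧
    ∀ pc : Projectivization ℂ (Fin 2 → ℂ) → Projectivization ℂ (Fin 2 → ℂ),
      (∀ (v : Fin 2 → ℂ) (hv : v ≠ 0) (hFv : Fc c v ≠ 0),
          pc (Projectivization.mk ℂ v hv) = Projectivization.mk ℂ (Fc c v) hFv) →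
      (∀ q, (pc ⁻¹' {q}).ncard = 1 ∨ (pc ⁻¹' {q}).ncard = 2) ∧
      ({q : Projectivization ℂ (Fin 2 → ℂ) | (pc ⁻¹' {q}).ncard = 1}.ncard = 2) ∧
      (∀ P : Set (Projectivization ℂ (Fin 2 → ℂ)), 3 ≤ P.ncard → 4 ≤ (pc ⁻¹' P).ncard) := by
  refine ⟨fun v hv => Fc_ne_zero c v hv, fun pc hpc => ?_⟩
  set cb := (starRingEnd ℂ) c with hcb
  -- pc is determined
  have hpc' : ∀ x : P1, pc x = Projectivization.mk ℂ (Fc c x.rep)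
      (Fc_ne_zero c x.rep x.rep_nonzero) := by
    intro x
    conv_lhs => rw [← mk_rep x]
    exact hpc x.rep x.rep_nonzero _
  -- identification of fibers with quadratic zero sets
  have fiber_eq : ∀ q : P1,
      pc ⁻¹' {q} = Qset (q.rep 1) (2 * c * q.rep 1 - 2 * cb * q.rep 0) (q.rep 0) := by
    intro q
    ext x
    simp only [Set.mem_preimage, Set.mem_singleton_iff, hpc' x]
    conv_lhs => rw [← mk_rep q]
    rw [cross_mk_eq_mk]
    show Fc c x.rep 0 * q.rep 1 = Fc c x.rep 1 * q.rep 0 ↔ x ∈ Qset _ _ _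
    have hmem : x ∈ Qset (q.rep 1) (2 * c * q.rep 1 - 2 * cb * q.rep 0) (q.rep 0) ↔
        q.rep 1 * (x.rep 0) ^ 2 + (2 * c * q.rep 1 - 2 * cb * q.rep 0) * (x.rep 0 * x.rep 1) +
          q.rep 0 * (x.rep 1) ^ 2 = 0 := Iff.rfl
    rw [hmem]
    simp only [Fc, Matrix.cons_val_zero, Matrix.cons_val_one, Matrix.head_cons]
    constructor
    · intro h'; linear_combination h'
    · intro h'; linear_combination h'
  have coeff_ne : ∀ q : P1,
      ¬(q.rep 1 = 0 ∧ 2 * c * q.rep 1 - 2 * cb * q.rep 0 = 0 ∧ q.rep 0 = 0) := by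
    rintro q ⟨h1, -, h0⟩
    exact q.rep_nonzero (funext fun i => by fin_cases i <;> simp [h0, h1])
  have fiber_card : ∀ q : P1, (pc ⁻¹' {q}).ncard = 1 ∨ (pc ⁻¹' {q}).ncard = 2 := by
    intro q
    rw [fiber_eq q]
    exact (quad_master _ _ _ (coeff_ne q)).1
  have fiber_one_iff : ∀ q : P1, (pc ⁻¹' {q}).ncard = 1 ↔
      (2 * c * q.rep 1 - 2 * cb * q.rep 0) ^ 2 = 4 * q.rep 1 * q.rep 0 := by
    intro q
    rw [fiber_eq q]
    exact (quad_master _ _ _ (coeff_ne q)).2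
  -- the set of points with singleton fiber
  have sing_eq : {q : P1 | (pc ⁻¹' {q}).ncard = 1} =
      Qset (4 * cb ^ 2) (-(8 * cb * c + 4)) (4 * c ^ 2) := by
    ext q
    simp only [Set.mem_setOf_eq, fiber_one_iff q]
    have hmem : q ∈ Qset (4 * cb ^ 2) (-(8 * cb * c + 4)) (4 * c ^ 2) ↔
        4 * cb ^ 2 * (q.rep 0) ^ 2 + (-(8 * cb * c + 4)) * (q.rep 0 * q.rep 1) +
          4 * c ^ 2 * (q.rep 1) ^ 2 = 0 := Iff.rfl
    rw [hmem]
    constructor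
    · intro h'; linear_combination h'
    · intro h'; linear_combination h'
  have hBne : -(8 * cb * c + 4) ≠ 0 := by
    have := pos_aux c 8 4 (by norm_num) (by norm_num)
    intro h'
    apply this
    have : (8 : ℂ) * cb * c + 4 = 0 := by linear_combination -h'
    rw [hcb] at this
    push_cast
    linear_combination this
  have sing_card : {q : P1 | (pc ⁻¹' {q}).ncard = 1}.ncard = 2 := by
    rw [sing_eq]
    have h := quad_master (4 * cb ^ 2) (-(8 * cb * c + 4)) (4 * c ^ 2)
      (fun h' => hBne h'.2.1)
    rcases h.1 with h1 | h2
    · exfalso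
      have hd := h.2.mp h1
      have : (64 : ℂ) * (cb * c) + 16 = 0 := by linear_combination hd
      have hnz := pos_aux c 64 16 (by norm_num) (by norm_num)
      apply hnz
      rw [hcb] at this
      push_cast
      linear_combination this
    · exact h2
  refine ⟨fiber_card, sing_card, ?_⟩
  -- last part
  intro P hP
  obtain ⟨T, hTP, hT3⟩ := Set.exists_subset_card_eq hP
  obtain ⟨q1, q2, q3, h12, h13, h23, rfl⟩ := Set.ncard_eq_three.mp hT3
  have fib_fin : ∀ q : P1, (pc ⁻¹' {q}).Finite := by
    intro q
    apply Set.finite_of_ncard_ne_zero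
    rcases fiber_card q with h | h <;> omega
  have fib_pos : ∀ q : P1, 1 ≤ (pc ⁻¹' {q}).ncard := by
    intro q
    rcases fiber_card q with h | h <;> omega
  have disj : ∀ {a b : P1}, a ≠ b → Disjoint (pc ⁻¹' {a}) (pc ⁻¹' {b}) := by
    intro a b hab
    rw [Set.disjoint_left]
    rintro x (hxa : pc x = a) (hxb : pc x = b)
    exact hab (hxa ▸ hxb ▸ rfl)
  -- not all three fibers are singletons
  have not_all_one : ¬((pc ⁻¹' {q1}).ncard = 1 ∧ (pc ⁻¹' {q2}).ncard = 1 ∧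
      (pc ⁻¹' {q3}).ncard = 1) := by
    rintro ⟨n1, n2, n3⟩
    have hsub : ({q1, q2, q3} : Set P1) ⊆ {q : P1 | (pc ⁻¹' {q}).ncard = 1} := by
      rintro q (rfl | rfl | rfl) <;> assumption
    have hfin : {q : P1 | (pc ⁻¹' {q}).ncard = 1}.Finite :=
      Set.finite_of_ncard_ne_zero (by rw [sing_card]; omega)
    have := Set.ncard_le_ncard hsub hfin
    rw [sing_card, hT3] at this
    omega
  -- union of the three fibers
  have hd23 : Disjoint (pc ⁻¹' {q2}) (pc ⁻¹' {q3}) := disj h23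
  have hd123 : Disjoint (pc ⁻¹' {q1}) (pc ⁻¹' {q2} ∪ pc ⁻¹' {q3}) := by
    rw [Set.disjoint_union_right]
    exact ⟨disj h12, disj h13⟩
  have hcard_union : (pc ⁻¹' {q1} ∪ (pc ⁻¹' {q2} ∪ pc ⁻¹' {q3})).ncard =
      (pc ⁻¹' {q1}).ncard + ((pc ⁻¹' {q2}).ncard + (pc ⁻¹' {q3}).ncard) := by
    rw [Set.ncard_union_eq hd123 (fib_fin q1) ((fib_fin q2).union (fib_fin q3)),
      Set.ncard_union_eq hd23 (fib_fin q2) (fib_fin q3)]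
  have hsub : pc ⁻¹' {q1} ∪ (pc ⁻¹' {q2} ∪ pc ⁻¹' {q3}) ⊆ pc ⁻¹' P := by
    apply Set.union_subset
    · exact Set.preimage_mono (Set.singleton_subset_iff.mpr (hTP (by left; rfl)))
    · apply Set.union_subset
      · exact Set.preimage_mono (Set.singleton_subset_iff.mpr (hTP (by right; left; rfl)))
      · exact Set.preimage_mono (Set.singleton_subset_iff.mpr (hTP (by right; right; rfl)))
  have hPfin : P.Finite := Set.finite_of_ncard_ne_zero (by omega)
  have hpre_fin : (pc ⁻¹' P).Finite := by
    rw [← Set.biUnion_preimage_singleton]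
    exact Set.Finite.biUnion hPfin (fun q _ => fib_fin q)
  have hle := Set.ncard_le_ncard hsub hpre_fin
  rw [hcard_union] at hle
  have h1 := fiber_card q1
  have h2 := fiber_card q2
  have h3 := fiber_card q3
  omega

end
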